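/- arXiv:math/0509023 — 2 statements merged into one kernel-verified Lean document; each statement's English description precedes it below -/
import Mathlib

section
/- Let a = (1, 3·2^{1/3}, −3·2^{2/3}) ∈ ℝ³, where 2^{1/3} is the real cube root of 2. Then the components of a are linearly independent over ℚ; the integer matrix B = [[1, 1, 1], [−18, 1, −3], [−18, 6, 1]] has determinant 1 or −1 and satisfies B·a = (1 + 3·2^{1/3} − 3·2^{2/3})·a, where 1 + 3·2^{1/3} − 3·2^{2/3} = (2^{1/3} − 1)³; neither 2^{1/3} − 1 nor (2^{1/3} − 1)² belongs to M(a); and M(a) = {ε·(2^{1/3} − 1)^{3k} : ε ∈ {1, −1}, k ∈ ℤ}. -/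
open Matrix

/-- The multiplier set of a frequency vector `a`: the set of real numbers `α`
such that some integer matrix `B` of determinant `±1` satisfies `B · a = α • a`. -/
def MultSet {n : ℕ} (a : Fin n → ℝ) : Set ℝ :=
  {α : ℝ | ∃ B : Matrix (Fin n) (Fin n) ℤ,
    (B.det = 1 ∨ B.det = -1) ∧ ∀ i, α * a i = ∑ j, (B i j : ℝ) * a j}

/-- `a` is `F`-algebraic: for some nonzero `θ`, the numbers `θ * a i` lie in `F`
and form a `ℚ`-basis of `F`. -/
def IsFAlgebraic {n : ℕ} (F : Subfield ℝ) (a : Fin n → ℝ) : Prop :=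
  ∃ θ : ℝ, θ ≠ 0 ∧ ∃ bas : Module.Basis (Fin n) ℚ F, ∀ i, (bas i : ℝ) = θ * a i

/-- `MultSet a` is a finite-index subgroup of the unit group of the ring of
integers of `F`: every multiplier is a unit of `𝓞_F`, and finitely many units
`u i` suffice so that every unit of `𝓞_F` is some `u i` times a multiplier. -/
def MultSetFiniteIndexUnits {n : ℕ} (a : Fin n → ℝ) (F : Subfield ℝ) : Prop :=
  (∀ α ∈ MultSet a, ∃ u : (integralClosure ℤ F)ˣ,
      (((u : integralClosure ℤ F) : F) : ℝ) = α) ∧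
  ∃ m : ℕ, ∃ u : Fin m → (integralClosure ℤ F)ˣ,
    ∀ v : (integralClosure ℤ F)ˣ, ∃ i : Fin m, ∃ α ∈ MultSet a,
      (((v : integralClosure ℤ F) : F) : ℝ)
        = (((u i : integralClosure ℤ F) : F) : ℝ) * α

namespace Cbrt2Aux

open Polynomial


lemma int_cube_ne_two (m : ℤ) : m ^ 3 ≠ 2 := by
  intro h
  rcases le_or_gt m 1 with hm | hm
  · nlinarith [sq_nonneg (2*m + 1), sq_nonneg m]
  · nlinarith [sq_nonneg m]

lemma rat_cube_ne_two (b : ℚ) : b ^ 3 ≠ 2 := by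
  intro h
  exact int_cube_ne_two b.num (by have := congrArg Rat.num h; simpa using this)

lemma irr_X3_sub_2 : Irreducible (X ^ 3 - C (2 : ℚ)) :=
  X_pow_sub_C_irreducible_of_prime Nat.prime_three fun b => rat_cube_ne_two b

variable {c : ℝ}

lemma c_pos (hc3 : c ^ 3 = 2) : 0 < c := by
  by_contra h
  push_neg at h
  nlinarith [mul_nonneg (neg_nonneg.2 h) (sq_nonneg c)]

lemma c_lb (hc3 : c ^ 3 = 2) : 1.2 < c := by
  by_contra h
  push_neg at h
  nlinarith [sq_nonneg (c + 0.6), c_pos hc3]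

lemma c_ub (hc3 : c ^ 3 = 2) : c < 1.3 := by
  nlinarith [c_pos hc3, sq_nonneg c]

lemma minpoly_c (hc3 : c ^ 3 = 2) : minpoly ℚ c = X ^ 3 - C (2 : ℚ) := by
  refine (minpoly.eq_of_irreducible_of_monic irr_X3_sub_2 ?_ ?_).symm
  · simp only [map_sub, map_pow, aeval_X, aeval_C, eq_ratCast]
    rw [hc3]; norm_num
  · exact monic_X_pow_sub_C _ (by norm_num)

lemma coeffsQ (hc3 : c ^ 3 = 2) (p q r : ℚ) (h : (p : ℝ) + q * c + r * c ^ 2 = 0) :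
    p = 0 ∧ q = 0 ∧ r = 0 := by
  have hPc : aeval c (C p + C q * X + C r * X ^ 2) = 0 := by
    simp only [map_add, _root_.map_mul, map_pow, aeval_X, aeval_C, eq_ratCast]
    linear_combination h
  have hP0 : C p + C q * X + C r * X ^ 2 = 0 := by
    by_contra h0
    have h1 := minpoly.degree_le_of_ne_zero ℚ c h0 hPc
    rw [minpoly_c hc3, degree_X_pow_sub_C (by norm_num) (2 : ℚ)] at h1
    have h2 : (C p + C q * X + C r * X ^ 2).degree ≤ 2 := by
      compute_degree
    have := h1.trans h2
    norm_num at this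
  refine ⟨?_, ?_, ?_⟩
  · have := congrArg (fun P => Polynomial.coeff P 0) hP0
    simpa [coeff_add, coeff_C] using this
  · have := congrArg (fun P => Polynomial.coeff P 1) hP0
    simpa [coeff_add, coeff_C] using this
  · have := congrArg (fun P => Polynomial.coeff P 2) hP0
    simpa [coeff_add, coeff_C] using this

lemma coeffsZ (hc3 : c ^ 3 = 2) (x y z : ℤ) (h : (x : ℝ) + y * c + z * c ^ 2 = 0) :
    x = 0 ∧ y = 0 ∧ z = 0 := by
  have h' : ((x : ℚ) : ℝ) + (y : ℚ) * c + (z : ℚ) * c ^ 2 = 0 := by push_cast at h ⊢; exact h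
  have := coeffsQ hc3 _ _ _ h'
  exact ⟨by exact_mod_cast this.1, by exact_mod_cast this.2.1, by exact_mod_cast this.2.2⟩

lemma coords_eq (hc3 : c ^ 3 = 2) {x y z x' y' z' : ℤ}
    (h : (x : ℝ) + y * c + z * c ^ 2 = (x' : ℝ) + y' * c + z' * c ^ 2) :
    x = x' ∧ y = y' ∧ z = z' := by
  have h0 : ((x - x' : ℤ) : ℝ) + ((y - y' : ℤ) : ℝ) * c + ((z - z' : ℤ) : ℝ) * c ^ 2 = 0 := by
    push_cast; linear_combination h
  have := coeffsZ hc3 _ _ _ h0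
  omega




lemma mulco (hc3 : c ^ 3 = 2) (x y z x' y' z' : ℝ) :
    (x + y * c + z * c ^ 2) * (x' + y' * c + z' * c ^ 2)
      = (x * x' + 2 * (y * z' + z * y')) + (x * y' + y * x' + 2 * z * z') * c
        + (x * z' + y * y' + z * x') * c ^ 2 := by
  linear_combination (z * y' + y * z' + c * z * z') * hc3

lemma normid (hc3 : c ^ 3 = 2) (x y z : ℝ) :
    (x + y * c + z * c ^ 2)
        * ((x ^ 2 - 2 * y * z) + (2 * z ^ 2 - x * y) * c + (y ^ 2 - x * z) * c ^ 2)
      = x ^ 3 + 2 * y ^ 3 + 4 * z ^ 3 - 6 * x * y * z := by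
  linear_combination (2 * z ^ 3 + y ^ 3 - 2 * x * y * z + c * y ^ 2 * z - c * x * z ^ 2) * hc3

lemma Qnn (hc3 : c ^ 3 = 2) (x y z : ℝ) :
    0 ≤ (x ^ 2 - 2 * y * z) + (2 * z ^ 2 - x * y) * c + (y ^ 2 - x * z) * c ^ 2 := by
  have key : (x ^ 2 - 2 * y * z) + (2 * z ^ 2 - x * y) * c + (y ^ 2 - x * z) * c ^ 2
      = (x - (y * c + z * c ^ 2) / 2) ^ 2 + 3 / 4 * (y * c - z * c ^ 2) ^ 2 := by
    linear_combination (y * z - c * z ^ 2) * hc3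
  rw [key]; positivity


lemma arch (hc3 : c ^ 3 = 2) (x y z v : ℝ) (hv : v = x + y * c + z * c ^ 2) (hvpos : 0 < v) :
    v * (3 * x - v) ^ 2 ≤ 4 * (x ^ 3 + 2 * y ^ 3 + 4 * z ^ 3 - 6 * x * y * z) := by
  have hc0 := c_pos hc3
  have key : c * (4 * (x ^ 3 + 2 * y ^ 3 + 4 * z ^ 3 - 6 * x * y * z) - v * (3 * x - v) ^ 2)
      = 6 * v * (y - c * z) ^ 2 := by
    subst hv
    linear_combination (3 * x * y ^ 2 - 8 * c * z ^ 3 - c * y ^ 3 + 6 * c * x * y * z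
      - 3 * c ^ 2 * y ^ 2 * z + 3 * c ^ 2 * x * z ^ 2 - 3 * c ^ 3 * y * z ^ 2
      - c ^ 4 * z ^ 3) * hc3
  nlinarith [mul_nonneg hvpos.le (sq_nonneg (y - c * z)), key, hc0]


-- placeholders for lemmas from previous chunks

set_option maxHeartbeats 1000000 in
lemma small_unit (hc3 : c ^ 3 = 2) (x y z x' y' z' : ℤ)
    (hinv : ((x : ℝ) + y * c + z * c ^ 2) * ((x' : ℝ) + y' * c + z' * c ^ 2) = 1)
    (h1 : 1 ≤ (x : ℝ) + y * c + z * c ^ 2)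
    (h2 : (x : ℝ) + y * c + z * c ^ 2 < c ^ 2 + c + 1) :
    x = 1 ∧ y = 0 ∧ z = 0 := by
  have hlb := c_lb hc3
  have hub := c_ub hc3
  have hc0 := c_pos hc3
  have hc2lb : 1.44 < c ^ 2 := by nlinarith
  have hc2ub : c ^ 2 < 1.69 := by nlinarith
  set v : ℝ := (x : ℝ) + y * c + z * c ^ 2 with hv
  clear_value v
  have hvpos : 0 < v := by linarith
  have hvub : v < 3.99 := by nlinarith
  -- coordinates of the product are (1,0,0)
  have hco : x * x' + 2 * (y * z' + z * y') = 1 ∧ x * y' + y * x' + 2 * z * z' = 0 ∧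
      x * z' + y * y' + z * x' = 0 := by
    have h' : ((x * x' + 2 * (y * z' + z * y') : ℤ) : ℝ)
        + ((x * y' + y * x' + 2 * z * z' : ℤ) : ℝ) * c
        + ((x * z' + y * y' + z * x' : ℤ) : ℝ) * c ^ 2
        = ((1 : ℤ) : ℝ) + ((0 : ℤ) : ℝ) * c + ((0 : ℤ) : ℝ) * c ^ 2 := by
      rw [hv] at hinv
      push_cast
      linear_combination hinv - mulco hc3 (x : ℝ) (y : ℝ) (z : ℝ) (x' : ℝ) (y' : ℝ) (z' : ℝ)
    exact coords_eq hc3 h'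
  -- the norm is 1
  have hNN : (x ^ 3 + 2 * y ^ 3 + 4 * z ^ 3 - 6 * x * y * z)
      * (x' ^ 3 + 2 * y' ^ 3 + 4 * z' ^ 3 - 6 * x' * y' * z') = 1 := by
    have idd : (x ^ 3 + 2 * y ^ 3 + 4 * z ^ 3 - 6 * x * y * z)
        * (x' ^ 3 + 2 * y' ^ 3 + 4 * z' ^ 3 - 6 * x' * y' * z')
        = (x * x' + 2 * (y * z' + z * y')) ^ 3 + 2 * (x * y' + y * x' + 2 * z * z') ^ 3
          + 4 * (x * z' + y * y' + z * x') ^ 3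
          - 6 * (x * x' + 2 * (y * z' + z * y')) * (x * y' + y * x' + 2 * z * z')
            * (x * z' + y * y' + z * x') := by ring
    rw [hco.1, hco.2.1, hco.2.2] at idd
    simpa using idd
  have hN1 : x ^ 3 + 2 * y ^ 3 + 4 * z ^ 3 - 6 * x * y * z = 1 := by
    rcases Int.mul_eq_one_iff_eq_one_or_neg_one.mp hNN with ⟨h, -⟩ | ⟨h, -⟩
    · exact h
    · exfalso
      have hq := Qnn hc3 (x : ℝ) (y : ℝ) (z : ℝ)
      have hnr := normid hc3 (x : ℝ) (y : ℝ) (z : ℝ)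
      have hcast : ((x : ℝ) ^ 3 + 2 * (y : ℝ) ^ 3 + 4 * (z : ℝ) ^ 3
          - 6 * (x : ℝ) * (y : ℝ) * (z : ℝ)) = ((-1 : ℤ) : ℝ) := by
        rw [← h]; push_cast; ring
      rw [hcast] at hnr
      push_cast at hnr
      nlinarith [mul_nonneg hvpos.le hq]
  have hNr : (x : ℝ) ^ 3 + 2 * (y : ℝ) ^ 3 + 4 * (z : ℝ) ^ 3
      - 6 * (x : ℝ) * (y : ℝ) * (z : ℝ) = 1 := by exact_mod_cast hN1
  -- bound x
  have harch1 := arch hc3 (x : ℝ) (y : ℝ) (z : ℝ) v hv hvpos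
  rw [hNr] at harch1
  have hx2 : (3 * (x : ℝ) - v) ^ 2 ≤ 4 := by nlinarith [sq_nonneg (3 * (x : ℝ) - v)]
  have hxlo : (0 : ℤ) ≤ x := by
    have hr : (-2 : ℝ) < 3 * (x : ℝ) := by nlinarith [sq_nonneg (3 * (x : ℝ) - v + 2)]
    have : (-2 : ℤ) < 3 * x := by exact_mod_cast hr
    omega
  have hxhi : x ≤ 1 := by
    have hr : 3 * (x : ℝ) < 6 := by nlinarith [sq_nonneg (3 * (x : ℝ) - v - 2)]
    have : 3 * x < (6 : ℤ) := by exact_mod_cast hr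
    omega
  -- bound z, using c*v
  have hcv : c * v = (2 * (z : ℝ)) + (x : ℝ) * c + (y : ℝ) * c ^ 2 := by
    rw [hv]; linear_combination (z : ℝ) * hc3
  have hcvpos : 0 < c * v := mul_pos hc0 hvpos
  have harch2 := arch hc3 (2 * (z : ℝ)) (x : ℝ) (y : ℝ) (c * v) hcv hcvpos
  have hN2 : (2 * (z : ℝ)) ^ 3 + 2 * (x : ℝ) ^ 3 + 4 * (y : ℝ) ^ 3
      - 6 * (2 * (z : ℝ)) * (x : ℝ) * (y : ℝ) = 2 := by linear_combination 2 * hNr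
  rw [hN2] at harch2
  have hcvlb : 1.2 < c * v := by nlinarith
  have hcvub : c * v < 4.99 := by nlinarith
  have hz2 : (3 * (2 * (z : ℝ)) - c * v) ^ 2 ≤ 20 / 3 := by
    nlinarith [sq_nonneg (3 * (2 * (z : ℝ)) - c * v)]
  have hzlo : (0 : ℤ) ≤ z := by
    have hr : (-2 : ℝ) < 6 * (z : ℝ) := by
      nlinarith [sq_nonneg (6 * (z : ℝ) - c * v + 3)]
    have : (-2 : ℤ) < 6 * z := by exact_mod_cast hr
    omega
  have hzhi : z ≤ 1 := by
    have hr : 6 * (z : ℝ) < 8 := by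
      nlinarith [sq_nonneg (6 * (z : ℝ) - c * v - 2.7)]
    have : (6 * z : ℤ) < (8 : ℤ) := by exact_mod_cast hr
    omega
  -- bound y, using c^2*v
  have hc2v : c ^ 2 * v = (2 * (y : ℝ)) + (2 * (z : ℝ)) * c + (x : ℝ) * c ^ 2 := by
    rw [hv]; linear_combination ((y : ℝ) + c * (z : ℝ)) * hc3
  have hc2vpos : 0 < c ^ 2 * v := by positivity
  have harch3 := arch hc3 (2 * (y : ℝ)) (2 * (z : ℝ)) (x : ℝ) (c ^ 2 * v) hc2v hc2vpos
  have hN3 : (2 * (y : ℝ)) ^ 3 + 2 * (2 * (z : ℝ)) ^ 3 + 4 * (x : ℝ) ^ 3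
      - 6 * (2 * (y : ℝ)) * (2 * (z : ℝ)) * (x : ℝ) = 4 := by linear_combination 4 * hNr
  rw [hN3] at harch3
  have hc2vlb : 1.44 < c ^ 2 * v := by nlinarith
  have hc2vub : c ^ 2 * v < 6.29 := by nlinarith
  have hy2 : (3 * (2 * (y : ℝ)) - c ^ 2 * v) ^ 2 ≤ 100 / 9 := by
    nlinarith [sq_nonneg (3 * (2 * (y : ℝ)) - c ^ 2 * v)]
  have hylo : (0 : ℤ) ≤ y := by
    have hr : (-2 : ℝ) < 6 * (y : ℝ) := by
      nlinarith [sq_nonneg (6 * (y : ℝ) - c ^ 2 * v + 3.44)]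
    have : (-2 : ℤ) < 6 * y := by exact_mod_cast hr
    omega
  have hyhi : y ≤ 1 := by
    have hr : (6 * y : ℝ) < 10 := by
      nlinarith [sq_nonneg (6 * (y : ℝ) - c ^ 2 * v - 3.37)]
    have : (6 * y : ℤ) < (10 : ℤ) := by exact_mod_cast hr
    omega
  interval_cases x <;> interval_cases y <;> interval_cases z <;>
    first
      | (exact ⟨rfl, rfl, rfl⟩)
      | (exact absurd hN1 (by decide))
      | (exfalso; rw [hv] at h2; push_cast at h2; linarith)




lemma u_ne (hc3 : c ^ 3 = 2) : c - 1 ≠ 0 := by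
  have := c_lb hc3; intro h; rw [sub_eq_zero] at h; rw [h] at this; norm_num at this

lemma t_pos (hc3 : c ^ 3 = 2) : 0 < c ^ 2 + c + 1 := by
  have := c_lb hc3; nlinarith

lemma ut_one (hc3 : c ^ 3 = 2) : (c - 1) * (c ^ 2 + c + 1) = 1 := by
  linear_combination hc3

lemma u_inv (hc3 : c ^ 3 = 2) : (c - 1)⁻¹ = c ^ 2 + c + 1 :=
  eq_comm.mp (eq_inv_of_mul_eq_one_left (by linear_combination ut_one hc3))

lemma inzc_zpow (hc3 : c ^ 3 = 2) (k : ℤ) :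
    ∃ p q r : ℤ, (c - 1) ^ k = (p : ℝ) + q * c + r * c ^ 2 := by
  have hu0 := u_ne hc3
  induction k using Int.induction_on with
  | zero => exact ⟨1, 0, 0, by norm_num⟩
  | succ n ih =>
    obtain ⟨p, q, r, h⟩ := ih
    refine ⟨-p + 2 * r, p - q, q - r, ?_⟩
    rw [zpow_add_one₀ hu0, h]
    push_cast
    linear_combination (r : ℝ) * hc3
  | pred n ih =>
    obtain ⟨p, q, r, h⟩ := ih
    refine ⟨p + 2 * q + 2 * r, p + q + 2 * r, p + q + r, ?_⟩
    have hstep : (c - 1) ^ (-(n : ℤ) - 1) = (c - 1) ^ (-(n : ℤ)) * (c ^ 2 + c + 1) := by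
      rw [zpow_sub_one₀ hu0, u_inv hc3]
    rw [hstep, h]
    push_cast
    linear_combination ((q : ℝ) + (r : ℝ) + c * (r : ℝ)) * hc3

lemma unit_pow (hc3 : c ^ 3 = 2) (x y z x' y' z' : ℤ)
    (hinv : ((x : ℝ) + y * c + z * c ^ 2) * ((x' : ℝ) + y' * c + z' * c ^ 2) = 1)
    (hpos : 0 < (x : ℝ) + y * c + z * c ^ 2) :
    ∃ k : ℤ, (x : ℝ) + y * c + z * c ^ 2 = (c - 1) ^ k := by
  have hu0 := u_ne hc3
  have ht0 := t_pos hc3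
  have ht1 : 1 < c ^ 2 + c + 1 := by have := c_lb hc3; nlinarith
  obtain ⟨n, hn1, hn2⟩ := exists_mem_Ico_zpow hpos ht1
  have htn : (0 : ℝ) < (c ^ 2 + c + 1) ^ n := zpow_pos ht0 n
  have hukn : (c - 1) ^ n = ((c ^ 2 + c + 1) ^ n)⁻¹ := by
    rw [show c - 1 = (c ^ 2 + c + 1)⁻¹ by rw [← u_inv hc3, inv_inv], _root_.inv_zpow]
  obtain ⟨p, q, r, hpr⟩ := inzc_zpow hc3 n
  obtain ⟨p', q', r', hpr'⟩ := inzc_zpow hc3 (-n)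
  set v : ℝ := (x : ℝ) + y * c + z * c ^ 2 with hv
  set v' : ℝ := (x' : ℝ) + y' * c + z' * c ^ 2 with hv'
  -- coordinates of w = v * (c-1)^n and w' = v' * (c-1)^(-n)
  have hW : v * (c - 1) ^ n = ((x * p + 2 * (y * r + z * q) : ℤ) : ℝ)
      + ((x * q + y * p + 2 * z * r : ℤ) : ℝ) * c
      + ((x * r + y * q + z * p : ℤ) : ℝ) * c ^ 2 := by
    rw [hpr, hv]
    push_cast
    exact mulco hc3 _ _ _ _ _ _
  have hW' : v' * (c - 1) ^ (-n) = ((x' * p' + 2 * (y' * r' + z' * q') : ℤ) : ℝ)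
      + ((x' * q' + y' * p' + 2 * z' * r' : ℤ) : ℝ) * c
      + ((x' * r' + y' * q' + z' * p' : ℤ) : ℝ) * c ^ 2 := by
    rw [hpr', hv']
    push_cast
    exact mulco hc3 _ _ _ _ _ _
  have hprod : (v * (c - 1) ^ n) * (v' * (c - 1) ^ (-n)) = 1 := by
    have huu : (c - 1) ^ n * (c - 1) ^ (-n) = 1 := by
      rw [← zpow_add₀ hu0]; simp
    calc (v * (c - 1) ^ n) * (v' * (c - 1) ^ (-n))
        = (v * v') * ((c - 1) ^ n * (c - 1) ^ (-n)) := by ring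
      _ = 1 := by rw [hinv, huu, mul_one]
  have h1w : 1 ≤ v * (c - 1) ^ n := by
    rw [hukn, ← div_eq_mul_inv, le_div_iff₀ htn, one_mul]
    exact hn1
  have h2w : v * (c - 1) ^ n < c ^ 2 + c + 1 := by
    rw [hukn, ← div_eq_mul_inv, div_lt_iff₀ htn]
    calc v < (c ^ 2 + c + 1) ^ (n + 1) := hn2
      _ = (c ^ 2 + c + 1) * (c ^ 2 + c + 1) ^ n := by
          rw [zpow_add_one₀ (ne_of_gt ht0)]; ring
  have hsmall := small_unit hc3 (x * p + 2 * (y * r + z * q)) (x * q + y * p + 2 * z * r)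
    (x * r + y * q + z * p) (x' * p' + 2 * (y' * r' + z' * q')) (x' * q' + y' * p' + 2 * z' * r')
    (x' * r' + y' * q' + z' * p')
    (by rw [← hW, ← hW']; exact hprod) (by rw [← hW]; exact h1w) (by rw [← hW]; exact h2w)
  have hw1 : v * (c - 1) ^ n = 1 := by
    rw [hW, hsmall.1, hsmall.2.1, hsmall.2.2]
    norm_num
  refine ⟨-n, ?_⟩
  rw [_root_.zpow_neg]
  field_simp at hw1 ⊢
  linarith [hw1]




lemma w_t3 (hc3 : c ^ 3 = 2) : (c - 1) ^ 3 * (19 + 15 * c + 12 * c ^ 2) = 1 := by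
  linear_combination (10 - 21 * c + 12 * c ^ 2) * hc3

lemma neg3_inv (hc3 : c ^ 3 = 2) : (c - 1) ^ (-3 : ℤ) = 19 + 15 * c + 12 * c ^ 2 := by
  have : ((c - 1) ^ (3 : ℕ))⁻¹ = 19 + 15 * c + 12 * c ^ 2 :=
    (eq_inv_of_mul_eq_one_left (by linear_combination w_t3 hc3)).symm
  rw [← this, ← zpow_natCast (c - 1) 3, ← _root_.zpow_neg]
  norm_num

lemma pow3q (hc3 : c ^ 3 = 2) (q : ℤ) : ∃ X Y Z : ℤ,
    (c - 1) ^ (3 * q) = ((3 * X + 1 : ℤ) : ℝ) + ((3 * Y : ℤ) : ℝ) * c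
      + ((3 * Z : ℤ) : ℝ) * c ^ 2 := by
  have hu0 := u_ne hc3
  induction q using Int.induction_on with
  | zero => exact ⟨0, 0, 0, by norm_num⟩
  | succ n ih =>
    obtain ⟨X, Y, Z, h⟩ := ih
    refine ⟨X - 6 * Y + 6 * Z, 3 * X + 1 + Y - 6 * Z, -3 * X - 1 + 3 * Y + Z, ?_⟩
    have he : (3 : ℤ) * ((n : ℤ) + 1) = 3 * (n : ℤ) + 3 := by ring
    rw [he, zpow_add₀ hu0, h, show ((3 : ℤ)) = ((3 : ℕ) : ℤ) by norm_num,
      zpow_natCast]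
    push_cast
    linear_combination (1 + 9 * (Z : ℝ) - 9 * (Y : ℝ) + 3 * (X : ℝ) - 9 * c * (Z : ℝ)
      + 3 * c * (Y : ℝ) + 3 * c ^ 2 * (Z : ℝ)) * hc3
  | pred n ih =>
    obtain ⟨X, Y, Z, h⟩ := ih
    refine ⟨19 * X + 6 + 24 * Y + 30 * Z, 15 * X + 5 + 19 * Y + 24 * Z,
      12 * X + 4 + 15 * Y + 19 * Z, ?_⟩
    have he : (3 : ℤ) * (-(n : ℤ) - 1) = 3 * (-(n : ℤ)) + (-3) := by ring
    rw [he, zpow_add₀ hu0, h, neg3_inv hc3]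
    push_cast
    linear_combination (45 * (Z : ℝ) + 36 * (Y : ℝ) + 36 * c * (Z : ℝ)) * hc3

lemma div3 (hc3 : c ^ 3 = 2) (k xx b d : ℤ)
    (h : (c - 1) ^ k = (xx : ℝ) + ((3 * b : ℤ) : ℝ) * c + ((3 * d : ℤ) : ℝ) * c ^ 2) :
    ∃ m : ℤ, k = 3 * m := by
  have hu0 := u_ne hc3
  set q : ℤ := k / 3 with hq
  obtain ⟨X, Y, Z, hXYZ⟩ := pow3q hc3 q
  have hr : k % 3 = 0 ∨ k % 3 = 1 ∨ k % 3 = 2 := by omega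
  rcases hr with h0 | h1 | h2
  · exact ⟨q, by omega⟩
  · exfalso
    have hk : k = 3 * q + 1 := by omega
    clear_value q
    have hkk : (c - 1) ^ k = (c - 1) ^ (3 * q) * (c - 1) := by
      rw [hk, zpow_add₀ hu0, zpow_one]
    rw [hkk, hXYZ] at h
    have h' : ((-(3 * X + 1) + 6 * Z - xx : ℤ) : ℝ)
        + (((3 * X + 1) - 3 * Y - 3 * b : ℤ) : ℝ) * c
        + ((3 * Y - 3 * Z - 3 * d : ℤ) : ℝ) * c ^ 2 = 0 := by
      push_cast at h ⊢
      linear_combination h - (3 * (Z : ℝ)) * hc3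
    have := coeffsZ hc3 _ _ _ h'
    omega
  · exfalso
    have hk : k = 3 * q + 2 := by omega
    clear_value q
    have hkk : (c - 1) ^ k = (c - 1) ^ (3 * q) * (c - 1) ^ 2 := by
      rw [hk, zpow_add₀ hu0, show ((2 : ℤ)) = ((2 : ℕ) : ℤ) by norm_num, zpow_natCast]
    rw [hkk, hXYZ] at h
    have h' : (((3 * X + 1) + 6 * Y - 12 * Z - xx : ℤ) : ℝ)
        + ((-2 * (3 * X + 1) + 3 * Y + 6 * Z - 3 * b : ℤ) : ℝ) * c
        + (((3 * X + 1) - 6 * Y + 3 * Z - 3 * d : ℤ) : ℝ) * c ^ 2 = 0 := by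
      push_cast at h ⊢
      linear_combination h - (-6 * (Z : ℝ) + 3 * (Y : ℝ) + 3 * c * (Z : ℝ)) * hc3
    have := coeffsZ hc3 _ _ _ h'
    omega



lemma pow_mult {a : Fin 3 → ℝ} {α : ℝ} {M : Matrix (Fin 3) (Fin 3) ℤ}
    (h : ∀ i, α * a i = ∑ j, (M i j : ℝ) * a j) :
    ∀ n : ℕ, ∀ i, α ^ n * a i = ∑ j, ((M ^ n) i j : ℝ) * a j := by
  intro n
  induction n with
  | zero => intro i; simp [Matrix.one_apply]
  | succ n ih =>
    intro i
    have h1 : α ^ (n + 1) * a i = α * (α ^ n * a i) := by ring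
    rw [h1, ih i, Finset.mul_sum]
    calc ∑ j, α * (((M ^ n) i j : ℝ) * a j)
        = ∑ j, ((M ^ n) i j : ℝ) * (α * a j) :=
          Finset.sum_congr rfl fun j _ => by ring
      _ = ∑ j, ((M ^ n) i j : ℝ) * ∑ k, (M j k : ℝ) * a k :=
          Finset.sum_congr rfl fun j _ => by rw [h j]
      _ = ∑ j, ∑ k, ((M ^ n) i j : ℝ) * ((M j k : ℝ) * a k) := by
          simp [Finset.mul_sum]
      _ = ∑ k, ∑ j, ((M ^ n) i j : ℝ) * ((M j k : ℝ) * a k) := Finset.sum_comm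
      _ = ∑ k, ((M ^ (n + 1)) i k : ℝ) * a k := by
          refine Finset.sum_congr rfl fun k _ => ?_
          rw [pow_succ, Matrix.mul_apply]
          push_cast
          rw [Finset.sum_mul]
          exact Finset.sum_congr rfl fun j _ => by ring


lemma Bp_rows (hc3 : c ^ 3 = 2) (a : Fin 3 → ℝ) (ha : a = ![(1 : ℝ), 3 * c, -3 * c ^ 2]) :
    ∀ i, (1 + 3 * c - 3 * c ^ 2) * a i
      = ∑ j, ((!![1, 1, 1; -18, 1, -3; -18, 6, 1] : Matrix (Fin 3) (Fin 3) ℤ) i j : ℝ) * a j := by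
  intro i
  fin_cases i <;>
    simp [ha, Fin.sum_univ_three] <;>
    first
      | linear_combination (0 : ℝ) * hc3
      | linear_combination (-9 : ℝ) * hc3
      | linear_combination (-9 + 9 * c) * hc3

lemma Bm_rows (hc3 : c ^ 3 = 2) (a : Fin 3 → ℝ) (ha : a = ![(1 : ℝ), 3 * c, -3 * c ^ 2]) :
    ∀ i, (19 + 15 * c + 12 * c ^ 2) * a i
      = ∑ j, ((!![19, 5, -4; 72, 19, -15; -90, -24, 19] : Matrix (Fin 3) (Fin 3) ℤ) i j : ℝ)
          * a j := by
  intro i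
  fin_cases i <;>
    simp [ha, Fin.sum_univ_three] <;>
    first
      | linear_combination (0 : ℝ) * hc3
      | linear_combination (36 : ℝ) * hc3
      | linear_combination (-45 - 36 * c) * hc3

lemma Bp_det : (!![1, 1, 1; -18, 1, -3; -18, 6, 1] : Matrix (Fin 3) (Fin 3) ℤ).det = 1 := by
  norm_num [Matrix.det_fin_three, Matrix.cons_val_zero, Matrix.cons_val_one,
    Matrix.head_cons, Matrix.cons_val_two, Matrix.tail_cons, Matrix.head_fin_const,
    Matrix.vecHead, Matrix.vecTail]

lemma Bm_det : (!![19, 5, -4; 72, 19, -15; -90, -24, 19] : Matrix (Fin 3) (Fin 3) ℤ).det = 1 := by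
  norm_num [Matrix.det_fin_three, Matrix.cons_val_zero, Matrix.cons_val_one,
    Matrix.head_cons, Matrix.cons_val_two, Matrix.tail_cons, Matrix.head_fin_const,
    Matrix.vecHead, Matrix.vecTail]


end Cbrt2Aux

/-- for `a = (1, 3·2^(1/3), -3·2^(2/3))`: the components are
`ℚ`-linearly independent, the matrix `B = [[1,1,1],[-18,1,-3],[-18,6,1]]` has
determinant `±1` and realizes the multiplier
`1 + 3·2^(1/3) - 3·2^(2/3) = (2^(1/3) - 1)³`, neither `2^(1/3) - 1` nor
`(2^(1/3) - 1)²` is a multiplier, and `M(a) = {±(2^(1/3)-1)^(3k) : k ∈ ℤ}`. -/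

theorem cbrt2_flow_example (c : ℝ) (hc : c = (2 : ℝ) ^ ((1 : ℝ) / 3))
    (a : Fin 3 → ℝ) (ha : a = ![(1 : ℝ), 3 * c, -3 * c ^ 2]) :
    LinearIndependent ℚ a ∧
    (((!![1, 1, 1; -18, 1, -3; -18, 6, 1] : Matrix (Fin 3) (Fin 3) ℤ).det = 1 ∨
      (!![1, 1, 1; -18, 1, -3; -18, 6, 1] : Matrix (Fin 3) (Fin 3) ℤ).det = -1) ∧
      ∀ i, (1 + 3 * c - 3 * c ^ 2) * a i
        = ∑ j, ((!![1, 1, 1; -18, 1, -3; -18, 6, 1] : Matrix (Fin 3) (Fin 3) ℤ) i j : ℝ)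
            * a j) ∧
    1 + 3 * c - 3 * c ^ 2 = (c - 1) ^ 3 ∧
    (c - 1) ∉ MultSet a ∧
    (c - 1) ^ 2 ∉ MultSet a ∧
    MultSet a = {x : ℝ | ∃ ε : ℝ, (ε = 1 ∨ ε = -1) ∧
        ∃ k : ℤ, x = ε * (c - 1) ^ (3 * k)} := by
  have hc3 : c ^ 3 = 2 := by
    rw [hc, ← Real.rpow_natCast ((2 : ℝ) ^ ((1 : ℝ) / 3)) 3,
      ← Real.rpow_mul (by norm_num : (0 : ℝ) ≤ 2)]
    norm_num
  clear hc
  have hu0 : c - 1 ≠ 0 := Cbrt2Aux.u_ne hc3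
  have part3 : 1 + 3 * c - 3 * c ^ 2 = (c - 1) ^ 3 := by linear_combination (-1 : ℝ) * hc3
  have part2 := Cbrt2Aux.Bp_rows hc3 a ha
  have ha0 : a 0 = 1 := by rw [ha]; rfl
  have ha1 : a 1 = 3 * c := by rw [ha]; rfl
  have ha2 : a 2 = -3 * c ^ 2 := by rw [ha]; rfl
  have part4 : (c - 1) ∉ MultSet a := by
    rintro ⟨B, -, hB⟩
    have h0 := hB 0
    rw [Fin.sum_univ_three, ha0, ha1, ha2] at h0
    have h' : ((B 0 0 + 1 : ℤ) : ℝ) + ((3 * B 0 1 - 1 : ℤ) : ℝ) * c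
        + ((-3 * B 0 2 : ℤ) : ℝ) * c ^ 2 = 0 := by
      push_cast
      linear_combination -h0
    obtain ⟨-, h2, -⟩ := Cbrt2Aux.coeffsZ hc3 _ _ _ h'
    omega
  have part5 : (c - 1) ^ 2 ∉ MultSet a := by
    rintro ⟨B, -, hB⟩
    have h0 := hB 0
    rw [Fin.sum_univ_three, ha0, ha1, ha2] at h0
    have h' : ((B 0 0 - 1 : ℤ) : ℝ) + ((3 * B 0 1 + 2 : ℤ) : ℝ) * c
        + ((-3 * B 0 2 - 1 : ℤ) : ℝ) * c ^ 2 = 0 := by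
      push_cast
      linear_combination -h0
    obtain ⟨-, h2, -⟩ := Cbrt2Aux.coeffsZ hc3 _ _ _ h'
    omega
  refine ⟨?_, ⟨Or.inl Cbrt2Aux.Bp_det, part2⟩, part3, part4, part5, ?_⟩
  · -- linear independence
    refine Fintype.linearIndependent_iff.mpr fun g hg => ?_
    rw [Fin.sum_univ_three, ha0, ha1, ha2] at hg
    simp only [Rat.smul_def] at hg
    have h := Cbrt2Aux.coeffsQ hc3 (g 0) (3 * g 1) (-3 * g 2)
      (by push_cast; linear_combination hg)
    have hg0 : g 0 = 0 := h.1
    have hg1 : g 1 = 0 := by linarith [h.2.1]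
    have hg2 : g 2 = 0 := by linarith [h.2.2]
    intro i
    fin_cases i <;> assumption
  · -- the multiplier group
    ext ξ
    simp only [Set.mem_setOf_eq]
    constructor
    · rintro ⟨B, hdet, hB⟩
      have h0 := hB 0
      rw [Fin.sum_univ_three, ha0, ha1, ha2] at h0
      have hξ : ξ = ((B 0 0 : ℤ) : ℝ) + ((3 * B 0 1 : ℤ) : ℝ) * c
          + ((-3 * B 0 2 : ℤ) : ℝ) * c ^ 2 := by
        push_cast
        linear_combination h0
      set A := B.adjugate with hA
      have hAB : A * B = B.det • (1 : Matrix (Fin 3) (Fin 3) ℤ) := Matrix.adjugate_mul B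
      have hsum : ξ * (((A 0 0 : ℤ) : ℝ) + ((3 * A 0 1 : ℤ) : ℝ) * c
          + ((-3 * A 0 2 : ℤ) : ℝ) * c ^ 2) = (B.det : ℝ) := by
        have hstep : ξ * (∑ j, (A 0 j : ℝ) * a j) = (B.det : ℝ) * a 0 := by
          calc ξ * ∑ j, (A 0 j : ℝ) * a j
              = ∑ j, (A 0 j : ℝ) * (ξ * a j) := by
                rw [Finset.mul_sum]; exact Finset.sum_congr rfl fun j _ => by ring
            _ = ∑ j, (A 0 j : ℝ) * ∑ k, (B j k : ℝ) * a k :=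
                Finset.sum_congr rfl fun j _ => by rw [hB j]
            _ = ∑ j, ∑ k, (A 0 j : ℝ) * ((B j k : ℝ) * a k) := by
                simp [Finset.mul_sum]
            _ = ∑ k, ∑ j, (A 0 j : ℝ) * ((B j k : ℝ) * a k) := Finset.sum_comm
            _ = ∑ k, ((A * B) 0 k : ℝ) * a k := by
                refine Finset.sum_congr rfl fun k _ => ?_
                rw [Matrix.mul_apply]; push_cast; rw [Finset.sum_mul]
                exact Finset.sum_congr rfl fun j _ => by ring
            _ = (B.det : ℝ) * a 0 := by
                rw [hAB, Fin.sum_univ_three]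
                simp [Matrix.smul_apply, Matrix.one_apply]
        rw [Fin.sum_univ_three, ha0, ha1, ha2] at hstep
        push_cast at hstep ⊢
        linear_combination hstep
      obtain ⟨s, hs, hsd⟩ : ∃ s : ℤ, (s = 1 ∨ s = -1) ∧ ((s : ℝ)) * ((B.det : ℤ) : ℝ) = 1 := by
        rcases hdet with h | h
        · exact ⟨1, Or.inl rfl, by rw [h]; norm_num⟩
        · exact ⟨-1, Or.inr rfl, by rw [h]; norm_num⟩
      have hinv : ξ * (((s * A 0 0 : ℤ) : ℝ) + ((3 * (s * A 0 1) : ℤ) : ℝ) * c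
          + ((-3 * (s * A 0 2) : ℤ) : ℝ) * c ^ 2) = 1 := by
        push_cast
        push_cast at hsum hsd
        linear_combination (s : ℝ) * hsum + hsd
      have hξne : ξ ≠ 0 := by
        intro h
        rw [h, zero_mul] at hinv
        norm_num at hinv
      rcases lt_or_gt_of_ne hξne with hneg | hpos
      · -- ξ < 0
        have hξ' : -ξ = ((-B 0 0 : ℤ) : ℝ) + ((3 * -B 0 1 : ℤ) : ℝ) * c
            + ((-3 * -B 0 2 : ℤ) : ℝ) * c ^ 2 := by
          push_cast
          push_cast at hξ
          linarith
        obtain ⟨k, hk⟩ := Cbrt2Aux.unit_pow hc3 (-B 0 0) (3 * -B 0 1) (-3 * -B 0 2)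
          (-(s * A 0 0)) (-(3 * (s * A 0 1))) (-(-3 * (s * A 0 2)))
          (by rw [hξ] at hinv; push_cast; push_cast at hinv; linear_combination hinv)
          (by rw [← hξ']; linarith)
        have hk'' : (c - 1) ^ k = ((-B 0 0 : ℤ) : ℝ) + ((3 * -B 0 1 : ℤ) : ℝ) * c
            + ((3 * B 0 2 : ℤ) : ℝ) * c ^ 2 := by
          push_cast
          push_cast at hk
          linear_combination -hk
        obtain ⟨m, hm⟩ := Cbrt2Aux.div3 hc3 k (-B 0 0) (-B 0 1) (B 0 2) hk''
        refine ⟨-1, Or.inr rfl, m, ?_⟩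
        have h1 : -ξ = (c - 1) ^ (3 * m) := by rw [← hm, ← hk, ← hξ']
        linarith
      · -- ξ > 0
        obtain ⟨k, hk⟩ := Cbrt2Aux.unit_pow hc3 (B 0 0) (3 * B 0 1) (-3 * B 0 2)
          (s * A 0 0) (3 * (s * A 0 1)) (-3 * (s * A 0 2))
          (by rw [hξ] at hinv; push_cast; push_cast at hinv; linear_combination hinv)
          (by rw [← hξ]; linarith)
        have hk'' : (c - 1) ^ k = ((B 0 0 : ℤ) : ℝ) + ((3 * B 0 1 : ℤ) : ℝ) * c
            + ((3 * -B 0 2 : ℤ) : ℝ) * c ^ 2 := by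
          push_cast
          push_cast at hk
          linear_combination -hk
        obtain ⟨m, hm⟩ := Cbrt2Aux.div3 hc3 k (B 0 0) (B 0 1) (-B 0 2) hk''
        refine ⟨1, Or.inl rfl, m, ?_⟩
        have h1 : ξ = (c - 1) ^ (3 * m) := by rw [← hm, ← hk, ← hξ]
        linarith
    · rintro ⟨ε, hε, k, hk⟩
      have hBp3 : ∀ i, ((c - 1) ^ 3 : ℝ) * a i
          = ∑ j, ((!![1, 1, 1; -18, 1, -3; -18, 6, 1] : Matrix (Fin 3) (Fin 3) ℤ) i j : ℝ)
              * a j := by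
        intro i; rw [← part3]; exact part2 i
      have hBm := Cbrt2Aux.Bm_rows hc3 a ha
      obtain ⟨Bmat, hdet1, hmul⟩ : ∃ Bmat : Matrix (Fin 3) (Fin 3) ℤ, Bmat.det = 1 ∧
          ∀ i, (c - 1) ^ (3 * k) * a i = ∑ j, (Bmat i j : ℝ) * a j := by
        rcases le_or_gt 0 k with hk0 | hk0
        · refine ⟨(!![1, 1, 1; -18, 1, -3; -18, 6, 1] : Matrix (Fin 3) (Fin 3) ℤ) ^ k.toNat,
            by rw [Matrix.det_pow, Cbrt2Aux.Bp_det, one_pow], ?_⟩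
          have he : (c - 1) ^ (3 * k) = ((c - 1) ^ 3) ^ k.toNat := by
            have h3 : (3 : ℤ) * k = ((3 * k.toNat : ℕ) : ℤ) := by omega
            rw [h3, zpow_natCast, pow_mul]
          rw [he]
          exact Cbrt2Aux.pow_mult hBp3 k.toNat
        · refine ⟨(!![19, 5, -4; 72, 19, -15; -90, -24, 19] : Matrix (Fin 3) (Fin 3) ℤ)
              ^ (-k).toNat,
            by rw [Matrix.det_pow, Cbrt2Aux.Bm_det, one_pow], ?_⟩
          have hw := Cbrt2Aux.w_t3 hc3
          have he : (c - 1) ^ (3 * k) = (19 + 15 * c + 12 * c ^ 2) ^ (-k).toNat := by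
            have h3 : (3 : ℤ) * k = -((3 * (-k).toNat : ℕ) : ℤ) := by omega
            rw [h3, _root_.zpow_neg, zpow_natCast, pow_mul]
            exact inv_eq_of_mul_eq_one_right (by rw [← mul_pow, hw, one_pow])
          rw [he]
          exact Cbrt2Aux.pow_mult hBm (-k).toNat
      rcases hε with h1 | h1
      · exact ⟨Bmat, Or.inl hdet1, fun i => by rw [hk, h1, one_mul]; exact hmul i⟩
      · refine ⟨-Bmat, Or.inr ?_, fun i => ?_⟩
        · rw [Matrix.det_neg, hdet1]
          norm_num
        · rw [hk, h1]
          calc (-1 * (c - 1) ^ (3 * k)) * a i = -((c - 1) ^ (3 * k) * a i) := by ring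
            _ = -∑ j, (Bmat i j : ℝ) * a j := by rw [hmul i]
            _ = ∑ j, ((-Bmat) i j : ℝ) * a j := by
                rw [← Finset.sum_neg_distrib]
                exact Finset.sum_congr rfl fun j _ => by
                  simp [Matrix.neg_apply]
end

section
/- Let n ≥ 2, let δ ∈ ℝ be a root of an irreducible polynomial of degree n with rational coefficients, and let C be an invertible n×n matrix with rational entries. Define a = (a_1, …, a_n) by a_i = Σ_{j=1}^n C_{ij}·δ^j. Then a_1, …, a_n form a ℚ-basis of the real algebraic number field ℚ(δ) (so a is ℚ(δ)-algebraic with θ = 1), and consequently M(a) is a finite-index subgroup of the unit group 𝓞_{ℚ(δ)}^×. -/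
open Matrix

set_option synthInstance.maxHeartbeats 1000000
set_option maxHeartbeats 4000000

lemma eval_charpoly' {R : Type*} [CommRing R] {m : Type*} [DecidableEq m] [Fintype m]
    (M : Matrix m m R) (t : R) :
    (M.charpoly).eval t = (t • (1 : Matrix m m R) - M).det := by
  rw [Matrix.charpoly, ← Polynomial.coe_evalRingHom, RingHom.map_det]
  congr 1
  ext i j
  by_cases h : i = j
  · subst h
    simp [Matrix.charmatrix_apply_eq]
  · simp [Matrix.charmatrix_apply_ne _ _ _ h, Matrix.one_apply_ne h]

lemma int_matrix_integral {K : Type*} [Field K] {n : ℕ} (v : Fin n → K) (i0 : Fin n)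
    (hv0 : v i0 ≠ 0) (x : K) (B : Matrix (Fin n) (Fin n) ℤ)
    (h : ∀ i, x * v i = ∑ j, (B i j : K) * v j) : IsIntegral ℤ x := by
  refine ⟨B.charpoly, B.charpoly_monic, ?_⟩
  have h1 : Polynomial.aeval x B.charpoly
      = ((B.map (Int.castRingHom K)).charpoly).eval x := by
    rw [Matrix.charpoly_map, Polynomial.eval_map, Polynomial.aeval_def]
    rfl
  rw [show Polynomial.eval₂ (algebraMap ℤ K) x B.charpoly = Polynomial.aeval x B.charpoly from rfl,
    h1, eval_charpoly']
  set M : Matrix (Fin n) (Fin n) K :=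
    x • (1 : Matrix (Fin n) (Fin n) K) - B.map (Int.castRingHom K) with hM
  have hMv : M.mulVec v = 0 := by
    funext i
    have : ∑ j, (x • (1 : Matrix (Fin n) (Fin n) K)) i j * v j = x * v i := by
      simp [Matrix.smul_apply, Matrix.one_apply, ite_mul, mul_ite, Finset.sum_ite_eq]
    simp only [Matrix.mulVec, dotProduct, hM, Matrix.sub_apply, sub_mul,
      Finset.sum_sub_distrib, this, Matrix.map_apply, Pi.zero_apply]
    rw [h i]
    simp [Matrix.map_apply]
  by_contra hdet
  haveI := M.invertibleOfIsUnitDet (isUnit_iff_ne_zero.mpr hdet)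
  have hv : v = 0 := by
    calc v = (1 : Matrix (Fin n) (Fin n) K).mulVec v := (Matrix.one_mulVec v).symm
    _ = (⅟M * M).mulVec v := by rw [invOf_mul_self]
    _ = (⅟M).mulVec (M.mulVec v) := by rw [← Matrix.mulVec_mulVec]
    _ = 0 := by rw [hMv, Matrix.mulVec_zero]
  exact hv0 (by rw [hv]; rfl)

lemma multset_mem {n : ℕ} (F : Subfield ℝ) (a : Fin n → ℝ) (bas : Module.Basis (Fin n) ℚ F)
    (hbas : ∀ i, (bas i : ℝ) = a i) (x y : F) (hxy : x * y = 1)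
    (hx : ∀ i, x * bas i ∈ Submodule.span ℤ (Set.range (fun j => (bas j : F))))
    (hy : ∀ i, y * bas i ∈ Submodule.span ℤ (Set.range (fun j => (bas j : F)))) :
    (x : ℝ) ∈ MultSet a := by
  choose Bx hBx using fun i => (Submodule.mem_span_range_iff_exists_fun ℤ).mp (hx i)
  choose By hBy using fun i => (Submodule.mem_span_range_iff_exists_fun ℤ).mp (hy i)
  have chain : ∀ i, ∑ l, (∑ k, Bx i k * By k l) • bas l = bas i := by
    intro i
    have s1 : (bas i : F) = y * (x * bas i) := by
      rw [← mul_assoc, mul_comm y x, hxy, one_mul]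
    rw [s1, ← hBx i, Finset.mul_sum]
    have s2 : ∀ k, y * (Bx i k • (bas k : F)) = Bx i k • (y * bas k) := fun k =>
      (mul_smul_comm _ _ _)
    simp only [s2]
    simp only [fun k => (hBy k).symm]
    simp only [Finset.smul_sum, smul_smul]
    rw [Finset.sum_comm]
    simp [Finset.sum_smul]
  set P : Matrix (Fin n) (Fin n) ℤ := Matrix.of (fun i l => ∑ k, Bx i k * By k l) with hP
  have key : ∀ i l, P i l = if i = l then 1 else 0 := by
    intro i l
    have hg : ∑ l, (((P i l : ℚ)) - (if i = l then 1 else 0)) • bas l = 0 := by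
      simp only [sub_smul, Finset.sum_sub_distrib]
      have e1 : ∑ l, ((P i l : ℚ)) • bas l = bas i := by
        rw [← chain i]
        refine Finset.sum_congr rfl fun l _ => ?_
        rw [← Int.cast_smul_eq_zsmul ℚ]
        rfl
      have e2 : ∑ l, (if i = l then (1:ℚ) else 0) • bas l = bas i := by simp [ite_smul]
      rw [e1, e2, sub_self]
    have h0 := Fintype.linearIndependent_iff.mp bas.linearIndependent _ hg l
    have := sub_eq_zero.mp h0
    by_cases h : i = l
    · simp only [if_pos h] at this ⊢
      exact_mod_cast this
    · simp only [if_neg h] at this ⊢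
      exact_mod_cast this
  refine ⟨Matrix.of Bx, ?_, ?_⟩
  · have hBB : (Matrix.of Bx) * (Matrix.of By) = 1 := by
      ext i l
      rw [Matrix.mul_apply, Matrix.one_apply]
      have := key i l
      rw [hP] at this
      exact this
    have := congrArg Matrix.det hBB
    rw [Matrix.det_mul, Matrix.det_one] at this
    exact Int.isUnit_iff.mp (IsUnit.of_mul_eq_one _ this)
  · intro i
    have h1 := congrArg (fun z : F => (z : ℝ)) (hBx i)
    push_cast at h1
    simp only [hbas] at h1
    rw [← h1]
    simp [Matrix.of_apply]

lemma multset_unit {n : ℕ} (hn : 2 ≤ n) (F : Subfield ℝ) (a : Fin n → ℝ)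
    (bas : Module.Basis (Fin n) ℚ F) (hbas : ∀ i, (bas i : ℝ) = a i)
    (α : ℝ) (hα : α ∈ MultSet a) :
    ∃ u : (integralClosure ℤ F)ˣ, (((u : integralClosure ℤ F) : F) : ℝ) = α := by
  obtain ⟨B, hdet, hB⟩ := hα
  set B' : Matrix (Fin n) (Fin n) ℤ := B.det • B.adjugate with hB'def
  have hdet2 : B.det * B.det = 1 := by rcases hdet with h | h <;> rw [h] <;> norm_num
  have hBB' : B * B' = 1 := by
    rw [hB'def, Matrix.mul_smul, Matrix.mul_adjugate, smul_smul, hdet2, one_smul]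
  have hB'B : B' * B = 1 := by
    rw [hB'def, Matrix.smul_mul, Matrix.adjugate_mul, smul_smul, hdet2, one_smul]
  set i0 : Fin n := ⟨0, by omega⟩ with hi0
  have hai0 : a i0 ≠ 0 := by
    rw [← hbas i0]
    intro h
    exact bas.ne_zero i0 (Subtype.ext h)
  have hinv : ∀ i, a i = ∑ j, (B' i j : ℝ) * (α * a j) := by
    intro i
    have : ∑ j, (B' i j : ℝ) * (α * a j)
        = ∑ k, ((B' * B : Matrix (Fin n) (Fin n) ℤ) i k : ℝ) * a k := by
      simp only [hB, Finset.mul_sum, Matrix.mul_apply]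
      rw [Finset.sum_comm]
      push_cast
      simp [Finset.sum_mul, mul_assoc]
    rw [this, hB'B]
    simp [Matrix.one_apply, ite_mul]
  have hα0 : α ≠ 0 := by
    rintro rfl
    apply hai0
    rw [hinv i0]
    simp
  have hamem : ∀ i, a i ∈ F := fun i => hbas i ▸ (bas i).2
  have hαF : α ∈ F := by
    have heq : α = (∑ j, (B i0 j : ℝ) * a j) * (a i0)⁻¹ := by
      rw [← hB i0]
      field_simp
    rw [heq]
    exact Subfield.mul_mem _
      (Subfield.sum_mem _ fun j _ => Subfield.mul_mem _ (intCast_mem _ _) (hamem j))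
      (Subfield.inv_mem _ (hamem i0))
  have hmul' : ∀ i, α⁻¹ * a i = ∑ j, (B' i j : ℝ) * a j := by
    intro i
    rw [hinv i, Finset.mul_sum]
    congr 1
    funext j
    field_simp
  set x : F := ⟨α, hαF⟩ with hx
  set x' : F := ⟨α⁻¹, Subfield.inv_mem _ hαF⟩ with hx'
  have hxint : IsIntegral ℤ x := by
    refine int_matrix_integral (fun i => bas i) i0 (bas.ne_zero i0) x B (fun i => ?_)
    apply Subtype.ext
    push_cast
    simp only [hbas]
    exact hB i
  have hx'int : IsIntegral ℤ x' := by
    refine int_matrix_integral (fun i => bas i) i0 (bas.ne_zero i0) x' B' (fun i => ?_)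
    apply Subtype.ext
    push_cast
    simp only [hbas]
    exact hmul' i
  have hxx' : x * x' = 1 := by
    apply Subtype.ext
    push_cast
    exact mul_inv_cancel₀ hα0
  have hx'x : x' * x = 1 := by rw [mul_comm]; exact hxx'
  refine ⟨⟨⟨x, hxint⟩, ⟨x', hx'int⟩, ?_, ?_⟩, rfl⟩
  · exact Subtype.ext hxx'
  · exact Subtype.ext hx'x
lemma multset_cofinite {n : ℕ} (F : Subfield ℝ) (a : Fin n → ℝ)
    (bas : Module.Basis (Fin n) ℚ F) (hbas : ∀ i, (bas i : ℝ) = a i)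
    (hFD : FiniteDimensional ℚ F) :
    ∃ m : ℕ, ∃ u : Fin m → (integralClosure ℤ F)ˣ,
      ∀ v : (integralClosure ℤ F)ˣ, ∃ i : Fin m, ∃ α ∈ MultSet a,
        (((v : integralClosure ℤ F) : F) : ℝ)
          = (((u i : integralClosure ℤ F) : F) : ℝ) * α := by
  classical
  set O : Subalgebra ℤ F := integralClosure ℤ F with hO
  set L : Submodule ℤ F := Submodule.span ℤ (Set.range (fun j => (bas j : F))) with hL
  -- step 1 : D
  obtain ⟨D, hD0, hD⟩ := exists_integral_multiples ℤ ℚ (L := F)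
    (Finset.univ.image (fun j => (bas j : F)))
  have hDL : ∀ y ∈ L, (D : F) * y ∈ O := by
    have hsub : L ≤ (Subalgebra.toSubmodule O).comap (LinearMap.mulLeft ℤ ((D : ℤ) : F)) := by
      rw [hL, Submodule.span_le]
      rintro _ ⟨j, rfl⟩
      have : IsIntegral ℤ (D • (bas j : F)) := hD _ (Finset.mem_image_of_mem _ (Finset.mem_univ j))
      simpa [zsmul_eq_mul, hO, mem_integralClosure_iff] using this
    intro y hy
    simpa using hsub hy
  -- step 2 : E
  have hOfg : (Subalgebra.toSubmodule O).FG := by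
    have h1 : Module.Finite ℤ ↥(integralClosure ℤ F) := IsIntegralClosure.finite ℤ ℚ F _
    exact Module.Finite.iff_fg.mp h1
  obtain ⟨s, hs⟩ := hOfg
  have hden : ∀ g : F, ∃ e : ℤ, e ≠ 0 ∧ (e : F) * g ∈ L := by
    intro g
    set q : Fin n → ℚ := fun j => bas.repr g j with hq
    refine ⟨∏ j, ((q j).den : ℤ), ?_, ?_⟩
    · exact Finset.prod_ne_zero_iff.mpr fun j _ => Int.natCast_ne_zero.mpr (q j).den_nz
    · set e : ℤ := ∏ j, ((q j).den : ℤ) with he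
      have hrepr : g = ∑ j, q j • bas j := (bas.sum_repr g).symm
      have : (e : F) * g = ∑ j, (e * q j : ℚ) • (bas j : F) := by
        rw [hrepr, Finset.mul_sum]
        refine Finset.sum_congr rfl fun j _ => ?_
        have h2 : ((e : ℚ) * q j) • (bas j : F) = (e : F) * (q j • bas j) := by
          rw [mul_smul, Int.cast_smul_eq_zsmul ℚ, zsmul_eq_mul]
        rw [h2]
      rw [this]
      refine Submodule.sum_mem _ fun j _ => ?_
      obtain ⟨r, hr⟩ : ((q j).den : ℤ) ∣ e := Finset.dvd_prod_of_mem _ (Finset.mem_univ j)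
      have hz : ((e : ℚ) * q j) = ((r * (q j).num : ℤ) : ℚ) := by
        have hd : (q j : ℚ) * ((q j).den : ℚ) = ((q j).num : ℚ) := Rat.mul_den_eq_num _
        push_cast [hr]
        rw [mul_comm ((q j).den : ℚ) (r : ℚ), mul_assoc, mul_comm ((q j).den : ℚ) (q j), hd]
      rw [hz, Int.cast_smul_eq_zsmul]
      exact Submodule.smul_mem _ _ (Submodule.subset_span ⟨j, rfl⟩)
    -- step 2b: E for all of O
  choose ef hef0 hef using hden
  set E : ℤ := ∏ g ∈ s, ef g with hE
  have hE0 : E ≠ 0 := Finset.prod_ne_zero_iff.mpr fun g _ => hef0 g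
  have hEO : ∀ w ∈ O, (E : F) * w ∈ L := by
    intro w hw
    have hw' : w ∈ Submodule.span ℤ (s : Set F) := by rw [hs]; exact hw
    have hsub : Submodule.span ℤ (s : Set F)
        ≤ L.comap (LinearMap.mulLeft ℤ ((E : ℤ) : F)) := by
      rw [Submodule.span_le]
      intro g hg
      obtain ⟨r, hr⟩ : ef g ∣ E := Finset.dvd_prod_of_mem _ hg
      have heg : ((E : ℤ) : F) * g = (r : F) * ((ef g : F) * g) := by push_cast [hr]; ring
      refine Submodule.mem_comap.mpr ?_
      show ((E : ℤ) : F) * g ∈ L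
      rw [heg, show ((r : ℤ) : F) * ((ef g : F) * g) = r • ((ef g : F) * g) from
        (zsmul_eq_mul _ _).symm]
      exact Submodule.smul_mem _ _ (hef g)
    exact Submodule.mem_comap.mp (hsub hw')
  -- step 3 : d
  set d : ℤ := D * E with hd
  have hd0 : d ≠ 0 := mul_ne_zero hD0 hE0
  have hdO : ∀ w ∈ O, (d : F) * w ∈ L := by
    intro w hw
    have h1 : (E : F) * w ∈ L := hEO w hw
    have h2 : (d : F) * w = D • ((E : F) * w) := by
      rw [zsmul_eq_mul]; push_cast [hd]; ring
    rw [h2]; exact Submodule.smul_mem _ _ h1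
  have hdL : ∀ y ∈ L, (d : F) * y ∈ O := by
    intro y hy
    have h1 : (D : F) * y ∈ O := hDL y hy
    have h2 : (d : F) * y = (E : F) * ((D : F) * y) := by push_cast [hd]; ring
    rw [h2]
    exact Subalgebra.mul_mem O (Subalgebra.intCast_mem O E) h1
  -- step 4 : quotient
  have hMF : Module.Finite ℤ ↥(integralClosure ℤ F) := IsIntegralClosure.finite ℤ ℚ F _
  set N : Submodule ℤ ↥(integralClosure ℤ F) :=
    Submodule.map ((d * d : ℤ) • (LinearMap.id :
      ↥(integralClosure ℤ F) →ₗ[ℤ] ↥(integralClosure ℤ F))) ⊤ with hN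
  obtain ⟨k, π, hπ⟩ := Module.Finite.exists_fin' ℤ ↥(integralClosure ℤ F)
  set g : (Fin k → ℤ) →ₗ[ℤ] (↥(integralClosure ℤ F) ⧸ N) := N.mkQ.comp π with hg
  have hgsurj : Function.Surjective g := (Submodule.mkQ_surjective N).comp hπ
  set n₀ : ℕ := (d * d).natAbs with hn₀
  have hn₀d : (n₀ : ℤ) = d * d := Int.natAbs_of_nonneg (mul_self_nonneg d)
  haveI : NeZero n₀ := ⟨Int.natAbs_ne_zero.mpr (mul_ne_zero hd0 hd0)⟩
  have hQtor : ∀ qq : ↥(integralClosure ℤ F) ⧸ N, (d * d : ℤ) • qq = 0 := by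
    intro qq
    obtain ⟨w, rfl⟩ := Submodule.mkQ_surjective N qq
    rw [← _root_.map_smul]
    rw [Submodule.mkQ_apply, Submodule.Quotient.mk_eq_zero]
    exact ⟨w, trivial, rfl⟩
  set cmap : (Fin k → ℤ) → (Fin k → ZMod n₀) := fun c i => ((c i : ℤ) : ZMod n₀) with hcmap
  have hcsurj : Function.Surjective cmap := fun y =>
    ⟨fun i => (ZMod.intCast_surjective (y i)).choose,
      funext fun i => (ZMod.intCast_surjective (y i)).choose_spec⟩
  have hfac : ∀ c c', cmap c = cmap c' → g c = g c' := by
    intro c c' h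
    have hdvd : ∀ i, (n₀ : ℤ) ∣ (c i - c' i) := by
      intro i
      have h2 := congrFun h i
      rw [← (ZMod.intCast_zmod_eq_zero_iff_dvd _ _)]
      push_cast
      rw [sub_eq_zero]
      exact_mod_cast h2
    choose mm hmm using hdvd
    have hcc : c - c' = (d * d : ℤ) • mm := by
      funext i
      rw [Pi.sub_apply, Pi.smul_apply, smul_eq_mul, ← hn₀d]
      exact hmm i
    have h3 : g c - g c' = (d * d : ℤ) • g mm := by rw [← map_sub, hcc, _root_.map_smul]
    rw [hQtor (g mm)] at h3
    exact sub_eq_zero.mp h3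
  have hQfin : Finite (↥(integralClosure ℤ F) ⧸ N) := by
    refine Finite.of_surjective (fun y => g (Function.surjInv hcsurj y)) ?_
    intro qq
    obtain ⟨c, rfl⟩ := hgsurj qq
    exact ⟨cmap c, hfac _ _ (Function.surjInv_eq hcsurj (cmap c))⟩
  haveI := hQfin
  haveI : Fintype (↥(integralClosure ℤ F) ⧸ N) := Fintype.ofFinite _
  -- key stabilizer lemma
  have key : ∀ (u1 u2 : (integralClosure ℤ F)ˣ) (w : ↥(integralClosure ℤ F)),
      (d * d : ℤ) • w = (u1 : ↥(integralClosure ℤ F)) - (u2 : ↥(integralClosure ℤ F)) →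
      ∀ i : Fin n, (((u1⁻¹ * u2 : (integralClosure ℤ F)ˣ) : ↥(integralClosure ℤ F)) : F)
        * bas i ∈ L := by
    intro u1 u2 w hw i
    have hbasL : (bas i : F) ∈ L := Submodule.subset_span ⟨i, rfl⟩
    set ww : ↥(integralClosure ℤ F) := ((u1⁻¹ : (integralClosure ℤ F)ˣ)
      : ↥(integralClosure ℤ F)) * w with hww
    have hid : ((u1⁻¹ * u2 : (integralClosure ℤ F)ˣ) : ↥(integralClosure ℤ F))
        = 1 - (d * d : ℤ) • ww := by
      have h1 : ((u1⁻¹ : (integralClosure ℤ F)ˣ) : ↥(integralClosure ℤ F))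
          * ((u1 : ↥(integralClosure ℤ F)) - (u2 : ↥(integralClosure ℤ F)))
          = 1 - ((u1⁻¹ * u2 : (integralClosure ℤ F)ˣ) : ↥(integralClosure ℤ F)) := by
        rw [mul_sub, Units.val_mul, Units.inv_mul]
      rw [← hw, mul_smul_comm, ← hww] at h1
      linear_combination h1
    have hidF : (((u1⁻¹ * u2 : (integralClosure ℤ F)ˣ) : ↥(integralClosure ℤ F)) : F)
        = 1 - (d * d : ℤ) • ((ww : ↥(integralClosure ℤ F)) : F) := by
      rw [hid]
      push_cast
      ring
    rw [hidF, sub_mul, one_mul]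
    refine Submodule.sub_mem _ hbasL ?_
    have e1 : ((d * d : ℤ) • ((ww : ↥(integralClosure ℤ F)) : F)) * (bas i : F)
        = (d : F) * (((ww : ↥(integralClosure ℤ F)) : F) * ((d : F) * bas i)) := by
      rw [zsmul_eq_mul]; push_cast; ring
    rw [e1]
    exact hdO _ (Subalgebra.mul_mem O ww.2 (hdL _ hbasL))
  -- classification map
  set φ : (integralClosure ℤ F)ˣ → (↥(integralClosure ℤ F) ⧸ N) :=
    fun u => N.mkQ (u : ↥(integralClosure ℤ F)) with hφ
  set m := Fintype.card (↥(integralClosure ℤ F) ⧸ N) with hm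
  set eqv : Fin m ≃ (↥(integralClosure ℤ F) ⧸ N) := (Fintype.equivFin _).symm with heqv
  set us : Fin m → (integralClosure ℤ F)ˣ :=
    fun i => if h : ∃ u : (integralClosure ℤ F)ˣ, φ u = eqv i then h.choose else 1 with hus
  refine ⟨m, us, ?_⟩
  intro v
  set i : Fin m := eqv.symm (φ v) with hi
  have hex : ∃ u : (integralClosure ℤ F)ˣ, φ u = eqv i := ⟨v, by rw [hi, Equiv.apply_symm_apply]⟩
  have husi : us i = hex.choose := dif_pos hex
  have hφeq : φ (us i) = φ v := by rw [husi, hex.choose_spec, hi, Equiv.apply_symm_apply]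
  set u : (integralClosure ℤ F)ˣ := us i with hu
  have hsubN : ((u : ↥(integralClosure ℤ F)) - (v : ↥(integralClosure ℤ F))) ∈ N :=
    (Submodule.Quotient.eq N).mp hφeq
  obtain ⟨w, -, hw⟩ := hsubN
  have hw' : (d * d : ℤ) • w = (u : ↥(integralClosure ℤ F)) - (v : ↥(integralClosure ℤ F)) := hw
  set sU : (integralClosure ℤ F)ˣ := u⁻¹ * v with hsU
  have h1 : ∀ j : Fin n, ((sU : ↥(integralClosure ℤ F)) : F) * bas j ∈ L := key u v w hw'
  have h2 : ∀ j : Fin n, (((sU⁻¹ : (integralClosure ℤ F)ˣ) : ↥(integralClosure ℤ F)) : F)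
      * bas j ∈ L := by
    have hinv : sU⁻¹ = v⁻¹ * u := by rw [hsU, _root_.mul_inv_rev, inv_inv]
    rw [hinv]
    refine key v u (-w) ?_
    rw [smul_neg, hw']
    ring
  have hxy : ((sU : ↥(integralClosure ℤ F)) : F)
      * (((sU⁻¹ : (integralClosure ℤ F)ˣ) : ↥(integralClosure ℤ F)) : F) = 1 := by
    have h3 : (sU : ↥(integralClosure ℤ F))
        * ((sU⁻¹ : (integralClosure ℤ F)ˣ) : ↥(integralClosure ℤ F)) = 1 := sU.mul_inv
    exact_mod_cast congrArg (fun t : ↥(integralClosure ℤ F) => (t : F)) h3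
  have hα : (((sU : ↥(integralClosure ℤ F)) : F) : ℝ) ∈ MultSet a :=
    multset_mem F a bas hbas _ _ hxy h1 h2
  refine ⟨i, _, hα, ?_⟩
  have hv : v = u * sU := by rw [hsU, ← mul_assoc, mul_inv_cancel, one_mul]
  rw [hv]
  push_cast
  ring

/-- for `δ` a real root of an irreducible rational polynomial of
degree `n` and `C` an invertible rational matrix, the numbers
`a i = ∑ j, C i j * δ ^ (j+1)` form a `ℚ`-basis of `ℚ(δ)` (so `a` is
`ℚ(δ)`-algebraic with `θ = 1`), and `M(a)` is a finite-index subgroup of the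
unit group of the ring of integers of `ℚ(δ)`. -/
theorem qdelta_flow_example {n : ℕ} (hn : 2 ≤ n) (δ : ℝ)
    (p : Polynomial ℚ) (hp : Irreducible p) (hdeg : p.degree = n)
    (hroot : Polynomial.aeval δ p = 0)
    (C : Matrix (Fin n) (Fin n) ℚ) (hC : C.det ≠ 0)
    (a : Fin n → ℝ) (ha : ∀ i, a i = ∑ j, (C i j : ℝ) * δ ^ ((j : ℕ) + 1)) :
    (∃ bas : Module.Basis (Fin n) ℚ (Subfield.closure {δ} : Subfield ℝ),
      ∀ i, (bas i : ℝ) = a i) ∧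
    MultSetFiniteIndexUnits a (Subfield.closure {δ} : Subfield ℝ) := by
  classical
  have halg : IsAlgebraic ℚ δ := ⟨p, hp.ne_zero, hroot⟩
  have hδint : IsIntegral ℚ δ := halg.isIntegral
  have hpn : p.natDegree = n := Polynomial.natDegree_eq_of_degree_eq_some hdeg
  have hmin : minpoly ℚ δ = p * Polynomial.C p.leadingCoeff⁻¹ :=
    (minpoly.eq_of_irreducible hp hroot).symm
  have hlc : p.leadingCoeff ≠ 0 := Polynomial.leadingCoeff_ne_zero.mpr hp.ne_zero
  have hminn : (minpoly ℚ δ).natDegree = n := by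
    rw [hmin, Polynomial.natDegree_mul_C (inv_ne_zero hlc), hpn]
  have hδ0 : δ ≠ 0 := by
    intro h
    have h0 : p.coeff 0 = 0 := by
      have h2 := hroot
      rw [h] at h2
      rwa [Polynomial.aeval_def, Polynomial.eval₂_at_zero, map_eq_zero] at h2
    rcases Polynomial.X_dvd_iff.mpr h0 with ⟨q, hq⟩
    have hq0 : q ≠ 0 := by rintro rfl; rw [mul_zero] at hq; exact hp.ne_zero hq
    rcases hp.isUnit_or_isUnit hq with h1 | h2
    · exact Polynomial.not_isUnit_X h1
    · have hqd : q.natDegree = 0 := Polynomial.natDegree_eq_zero_of_isUnit h2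
      have : p.natDegree = 1 := by
        rw [hq, Polynomial.natDegree_mul Polynomial.X_ne_zero hq0,
          Polynomial.natDegree_X, hqd]
      omega
  set F : Subfield ℝ := Subfield.closure {δ} with hF
  have hFK : (IntermediateField.adjoin ℚ {δ}).toSubfield = F := by
    apply le_antisymm
    · have h : IntermediateField.adjoin ℚ {δ} ≤
          Subfield.toIntermediateField F (fun q => SubfieldClass.ratCast_mem _ q) :=
        IntermediateField.adjoin_le_iff.mpr
          (Set.singleton_subset_iff.mpr (Subfield.subset_closure rfl))
      intro x hx
      exact h hx
    · refine Subfield.closure_le.mpr (Set.singleton_subset_iff.mpr ?_)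
      exact IntermediateField.mem_adjoin_simple_self ℚ δ
  have hmemF : ∀ x : (IntermediateField.adjoin ℚ {δ}), (x : ℝ) ∈ F := fun x => hFK ▸ x.2
  have hmemK : ∀ x : F, (x : ℝ) ∈ IntermediateField.adjoin ℚ {δ} := fun x =>
    (IntermediateField.mem_toSubfield _ _).mp (hFK.symm.le x.2)
  haveI : FiniteDimensional ℚ (IntermediateField.adjoin ℚ {δ}) :=
    IntermediateField.adjoin.finiteDimensional hδint
  let e : (IntermediateField.adjoin ℚ {δ}) ≃ₗ[ℚ] F :=
    { toFun := fun x => ⟨x.1, hmemF x⟩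
      invFun := fun x => ⟨x.1, hmemK x⟩
      left_inv := fun x => rfl
      right_inv := fun x => rfl
      map_add' := fun x y => rfl
      map_smul' := fun q x => by
        apply Subtype.ext
        push_cast
        simp [Rat.smul_def] }
  haveI hFD : FiniteDimensional ℚ F := Module.Finite.equiv e
  have hfr : Module.finrank ℚ F = n := by
    rw [← e.finrank_eq, IntermediateField.adjoin.finrank hδint, hminn]
  have hδF : δ ∈ F := hF ▸ Subfield.subset_closure rfl
  have hamem : ∀ i, a i ∈ F := by
    intro i
    rw [ha i]
    exact Subfield.sum_mem _ fun j _ =>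
      Subfield.mul_mem _ (SubfieldClass.ratCast_mem _ _) (Subfield.pow_mem _ hδF _)
  set v : Fin n → F := fun i => ⟨a i, hamem i⟩ with hv
  have hpow0 : LinearIndependent ℚ (fun i : Fin n => δ ^ (i : ℕ)) := by
    have h := linearIndependent_pow (K := ℚ) (S := ℝ) δ
    rw [hminn] at h
    exact h
  have hpow : LinearIndependent ℚ (fun i : Fin n => δ ^ ((i : ℕ) + 1)) := by
    have hmul : LinearIndependent ℚ (fun i : Fin n => (LinearMap.mulLeft ℚ δ) (δ ^ (i : ℕ))) :=
      hpow0.map' _ (LinearMap.ker_eq_bot.mpr (mul_right_injective₀ hδ0))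
    convert hmul using 2 with i
    simp [LinearMap.mulLeft_apply, pow_succ']
  have hvind : LinearIndependent ℚ v := by
    rw [Fintype.linearIndependent_iff]
    intro c hc
    have hreal : ∑ i, (c i : ℝ) * a i = 0 := by
      have h0 := congrArg (fun x : F => (x : ℝ)) hc
      push_cast at h0
      simpa [Rat.smul_def] using h0
    have hE : ∑ j, (∑ i, c i * C i j) • δ ^ ((j : ℕ) + 1) = 0 := by
      simp only [Rat.smul_def]
      push_cast
      calc ∑ j : Fin n, (∑ i : Fin n, (c i : ℝ) * (C i j : ℝ)) * δ ^ ((j:ℕ)+1)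
          = ∑ j : Fin n, ∑ i : Fin n, (c i : ℝ) * ((C i j : ℝ) * δ ^ ((j:ℕ)+1)) := by
            simp [Finset.sum_mul, mul_assoc]
        _ = ∑ i : Fin n, (c i : ℝ) * ∑ j : Fin n, (C i j : ℝ) * δ ^ ((j:ℕ)+1) := by
            rw [Finset.sum_comm]; simp [Finset.mul_sum]
        _ = 0 := by simp only [← ha]; exact hreal
    have hcC : ∀ j, ∑ i, c i * C i j = 0 := Fintype.linearIndependent_iff.mp hpow _ hE
    have hvm : Matrix.vecMul c C = 0 := funext fun j => by
      simpa [Matrix.vecMul, dotProduct] using hcC j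
    have hCu : IsUnit C.det := isUnit_iff_ne_zero.mpr hC
    have : c = 0 := by
      have h1 : Matrix.vecMul c (C * C⁻¹) = 0 := by
        rw [← Matrix.vecMul_vecMul, hvm, Matrix.zero_vecMul]
      rwa [Matrix.mul_nonsing_inv C hCu, Matrix.vecMul_one] at h1
    exact fun i => congrFun this i
  have hcard : Fintype.card (Fin n) = Module.finrank ℚ F := by simp [hfr]
  haveI : Nonempty (Fin n) := ⟨⟨0, by omega⟩⟩
  set bas : Module.Basis (Fin n) ℚ F := basisOfLinearIndependentOfCardEqFinrank hvind hcard with hbasdef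
  have hbasc : ∀ i, (bas i : ℝ) = a i := fun i => by
    rw [hbasdef, coe_basisOfLinearIndependentOfCardEqFinrank]
  exact ⟨⟨bas, hbasc⟩, fun α hα => multset_unit hn F a bas hbasc α hα,
    multset_cofinite F a bas hbasc hFD⟩
end
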